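/- arXiv:2311.18606 — 5 statements merged into one kernel-verified Lean document; each statement's English description precedes it below -/
import Mathlib

section
/- Let n ≥ 2 and ε > 0. There exists δ > 0 such that for all λ₁,…,λₙ with λᵢ ≥ ε·H > 0 for every i (where H = Σλᵢ), one has (n·Σλᵢ² − H²)/H² ≥ δ·(1/nⁿ − (Πλᵢ)/Hⁿ). -/
open Finset

private lemma aux_exp_le (a t : ℝ) (ha : 0 < a) (ha1 : a ≤ 1) (hta : a ≤ t) :
    Real.exp ((t - 1) - (t - 1) ^ 2 / a ^ 2) ≤ t := by
  have ha2 : (0:ℝ) < a ^ 2 := by positivity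
  have ht : 0 < t := lt_of_lt_of_le ha hta
  have haa : a ^ 2 ≤ a := by nlinarith
  set u : ℝ := (t - 1) - (t - 1) ^ 2 / a ^ 2 with hu
  have hmul : u * a ^ 2 = (t - 1) * a ^ 2 - (t - 1) ^ 2 := by
    rw [hu, sub_mul, div_mul_cancel₀ _ ha2.ne']
  have hu1 : u < 1 := by
    have h : u * a ^ 2 < 1 * a ^ 2 := by nlinarith [sq_nonneg (t - 1 - a ^ 2 / 2)]
    exact lt_of_mul_lt_mul_right h ha2.le
  have h1u : 0 < 1 - u := by linarith
  have h2 : Real.exp u ≤ 1 / (1 - u) := by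
    rw [le_div_iff₀ h1u]
    have h3 : Real.exp u * (1 - u) ≤ Real.exp u * Real.exp (-u) := by
      have := Real.add_one_le_exp (-u)
      nlinarith [Real.exp_pos u]
    rw [← Real.exp_add] at h3
    simpa using h3
  refine h2.trans ?_
  rw [div_le_iff₀ h1u]
  have hkey : t * (1 - u) * a ^ 2 - 1 * a ^ 2 = (t - 1) ^ 2 * (t - a ^ 2) := by
    linear_combination (-t) * hmul
  nlinarith [sq_nonneg (t - 1)]

/-- Pinching controls the deficit of `K/Hⁿ` from `1/nⁿ` by the traceless second
fundamental form (cf. Lemma 5.1). -/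
theorem stmt_2 (n : ℕ) (hn : 2 ≤ n) (ε : ℝ) (hε : 0 < ε) :
    ∃ δ : ℝ, 0 < δ ∧ ∀ lam : Fin n → ℝ,
      (∀ i, ε * (∑ j, lam j) ≤ lam i) → 0 < ε * (∑ j, lam j) →
      ((n : ℝ) * (∑ i, (lam i) ^ 2) - (∑ i, lam i) ^ 2) / (∑ i, lam i) ^ 2 ≥
        δ * (1 / (n : ℝ) ^ n - (∏ i, lam i) / (∑ i, lam i) ^ n) := by
  have hn0 : (0:ℝ) < n := by
    have : (0:ℕ) < n := by omega
    exact_mod_cast this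
  refine ⟨ε ^ 2 * n ^ (n + 1), by positivity, ?_⟩
  intro lam hpinch hpos
  set H : ℝ := ∑ j, lam j with hH
  have hHpos : 0 < H := by nlinarith
  -- a = n * ε ≤ 1
  have hsum : (n:ℝ) * (ε * H) ≤ H := by
    calc (n:ℝ) * (ε * H) = ∑ _i : Fin n, ε * H := by
          simp [Finset.sum_const, mul_comm]
      _ ≤ ∑ i, lam i := Finset.sum_le_sum fun i _ => hpinch i
      _ = H := hH.symm
  have hapos : 0 < (n:ℝ) * ε := by positivity
  have ha1 : (n:ℝ) * ε ≤ 1 := by nlinarith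
  -- normalized curvatures
  set t : Fin n → ℝ := fun i => (n:ℝ) * lam i / H with hT
  have htge : ∀ i, (n:ℝ) * ε ≤ t i := by
    intro i
    have := hpinch i
    rw [hT]
    rw [le_div_iff₀ hHpos]
    nlinarith
  have htsum : ∑ i, t i = n := by
    rw [hT]
    rw [← Finset.sum_div, ← Finset.mul_sum, ← hH, mul_div_assoc,
      div_self hHpos.ne', mul_one]
  set S : ℝ := ∑ i, (t i - 1) ^ 2 with hS
  set P : ℝ := ∏ i, t i with hP
  -- product lower bound
  have hprod : 1 - S / ((n:ℝ) * ε) ^ 2 ≤ P := by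
    have h1 : Real.exp (∑ i, ((t i - 1) - (t i - 1) ^ 2 / ((n:ℝ) * ε) ^ 2)) ≤ P := by
      rw [Real.exp_sum]
      exact Finset.prod_le_prod (fun i _ => (Real.exp_pos _).le)
        (fun i _ => aux_exp_le _ _ hapos ha1 (htge i))
    have h2 : ∑ i, ((t i - 1) - (t i - 1) ^ 2 / ((n:ℝ) * ε) ^ 2) = - (S / ((n:ℝ) * ε) ^ 2) := by
      rw [Finset.sum_sub_distrib, ← Finset.sum_div, ← hS]
      have : ∑ i, (t i - 1) = 0 := by
        rw [Finset.sum_sub_distrib, htsum]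
        simp
      rw [this]
      ring
    rw [h2] at h1
    have := Real.add_one_le_exp (-(S / ((n:ℝ) * ε) ^ 2))
    linarith
  -- express goal quantities in terms of S, P
  have h1 : S * H ^ 2 = ∑ i, ((n:ℝ) * lam i - H) ^ 2 := by
    rw [hS, Finset.sum_mul]
    refine Finset.sum_congr rfl fun i _ => ?_
    rw [hT]
    field_simp
  have h2 : ∑ i, ((n:ℝ) * lam i - H) ^ 2
      = (n:ℝ) ^ 2 * (∑ i, lam i ^ 2) - (n:ℝ) * H ^ 2 := by
    have hc : ∀ i ∈ Finset.univ, ((n:ℝ) * lam i - H) ^ 2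
        = (n:ℝ) ^ 2 * lam i ^ 2 - 2 * (n:ℝ) * H * lam i + H ^ 2 := fun i _ => by ring
    rw [Finset.sum_congr rfl hc, Finset.sum_add_distrib, Finset.sum_sub_distrib,
      ← Finset.mul_sum, ← Finset.mul_sum, ← hH]
    simp only [Finset.sum_const, Finset.card_univ, Fintype.card_fin, nsmul_eq_mul]
    ring
  have hSeq : ((n : ℝ) * (∑ i, (lam i) ^ 2) - H ^ 2) / H ^ 2 = S / n := by
    rw [div_eq_div_iff (by positivity) hn0.ne']
    linear_combination -h1 - h2
  have hPeq : (∏ i, lam i) / H ^ n = P / (n:ℝ) ^ n := by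
    rw [hP, hT]
    rw [Finset.prod_div_distrib, Finset.prod_mul_distrib, Finset.prod_const,
      Finset.prod_const]
    simp only [Finset.card_univ, Fintype.card_fin]
    rw [div_div, mul_comm ((H:ℝ) ^ n) ((n:ℝ) ^ n),
      mul_div_mul_left _ _ (by positivity : ((n:ℝ) ^ n) ≠ 0)]
  rw [hSeq, hPeq, ge_iff_le]
  have hpown : (n:ℝ) ^ (n + 1) = (n:ℝ) ^ n * n := pow_succ _ _
  have hNpos : (0:ℝ) < (n:ℝ) ^ n := by positivity
  -- final arithmetic
  have key : ε ^ 2 * (n:ℝ) ^ (n + 1) * (1 / (n:ℝ) ^ n - P / (n:ℝ) ^ n) ≤ S / n := by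
    have h3 : ε ^ 2 * (n:ℝ) ^ (n + 1) * (1 / (n:ℝ) ^ n - P / (n:ℝ) ^ n)
        = ε ^ 2 * n * (1 - P) := by
      rw [hpown]; field_simp
    rw [h3]
    have h4 : 1 - P ≤ S / ((n:ℝ) * ε) ^ 2 := by linarith
    have h5 : ε ^ 2 * (n:ℝ) * (S / ((n:ℝ) * ε) ^ 2) = S / n := by
      field_simp
    nlinarith [h4, h5, mul_pos (mul_pos (mul_pos hε hε) hn0) hn0]
  exact key
end

section
/- Let n ≥ 2. For every β > 0 there exists a constant C with 0 < C < 1/nⁿ such that: if λ₁,…,λₙ > 0 satisfy (Πλᵢ)/(Σλᵢ)ⁿ ≥ C, then there exists ε with 0 < ε ≤ 1/n such that λᵢ ≥ ε·(Σλᵢ) for all i. Moreover ε → 1/n as C → 1/nⁿ. -/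
/-- AM–GM: the product is at most the arithmetic mean to the card power. -/
lemma amgm_aux {ι : Type*} (s : Finset ι) (f : ι → ℝ) (hf : ∀ i ∈ s, 0 ≤ f i)
    (hs : 0 < s.card) :
    ∏ i ∈ s, f i ≤ ((∑ i ∈ s, f i) / s.card) ^ s.card := by
  have hcard : (0:ℝ) < s.card := by exact_mod_cast hs
  have h := Real.geom_mean_le_arith_mean s (fun _ => (1:ℝ)) f (fun _ _ => zero_le_one)
    (by simpa using hcard) hf
  simp only [Real.rpow_one, one_mul, Finset.sum_const, nsmul_eq_mul, mul_one] at h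
  have hP : (0:ℝ) ≤ ∏ i ∈ s, f i := Finset.prod_nonneg hf
  have h2 := Real.rpow_le_rpow (Real.rpow_nonneg hP _) h (Nat.cast_nonneg s.card)
  rwa [← Real.rpow_mul hP, inv_mul_cancel₀ hcard.ne', Real.rpow_one,
    Real.rpow_natCast] at h2

lemma gmono_aux (n : ℕ) (hn : 2 ≤ n) :
    StrictMonoOn (fun t : ℝ => t * (1 - t) ^ (n - 1)) (Set.Icc 0 (1 / (n:ℝ))) := by
  have hN : (2:ℝ) ≤ n := by exact_mod_cast hn
  have hN0 : (0:ℝ) < n := by linarith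
  apply strictMonoOn_of_deriv_pos (convex_Icc _ _)
  · exact (continuous_id.mul ((continuous_const.sub continuous_id).pow _)).continuousOn
  · intro t ht
    rw [interior_Icc] at ht
    have h1 : HasDerivAt (fun t : ℝ => t * (1 - t) ^ (n - 1))
        (1 * (1 - t) ^ (n - 1) + t * (((n-1:ℕ):ℝ) * (1 - t) ^ (n - 1 - 1) * (0 - 1))) t :=
      (hasDerivAt_id t).mul (((hasDerivAt_const t 1).sub (hasDerivAt_id t)).pow (n-1))
    rw [h1.deriv]
    have ht1 : t < 1 / (n:ℝ) := ht.2
    have htn : t * n < 1 := (lt_div_iff₀ hN0).mp ht.2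
    have ht2 : t < 1 := by nlinarith
    have hk : n - 1 = (n - 2) + 1 := by omega
    have hk2 : n - 1 - 1 = n - 2 := by omega
    have e : 1 * (1 - t) ^ (n - 1) + t * (((n-1:ℕ):ℝ) * (1 - t) ^ (n - 1 - 1) * (0 - 1))
        = (1 - t) ^ (n - 2) * (1 - (n:ℝ) * t) := by
      rw [hk2, hk, pow_succ]
      push_cast [Nat.cast_sub (by omega : 2 ≤ n)]
      ring
    rw [e]
    exact mul_pos (pow_pos (by linarith) _) (by nlinarith)

/-- Lemma 4.3 (first part): strong pinching of `K/Hⁿ` forces every principal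
curvature to be a definite fraction `ε` of `H`, and `ε → 1/n` as `C → 1/nⁿ`
(formalized: for any `η > 0` the constant `C` can be chosen so that
`1/n - η < ε`). -/
theorem stmt_3 (n : ℕ) (hn : 2 ≤ n) (β : ℝ) (hβ : 0 < β) :
    ∀ η : ℝ, 0 < η → ∃ C : ℝ, 0 < C ∧ C < 1 / (n : ℝ) ^ n ∧
      ∃ ε : ℝ, 0 < ε ∧ ε ≤ 1 / (n : ℝ) ∧ 1 / (n : ℝ) - η < ε ∧
        ∀ lam : Fin n → ℝ, (∀ i, 0 < lam i) →
          C ≤ (∏ i, lam i) / (∑ i, lam i) ^ n →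
          ∀ i, ε * (∑ j, lam j) ≤ lam i := by
  intro η hη
  have hN : (2:ℝ) ≤ n := by exact_mod_cast hn
  have hN0 : (0:ℝ) < n := by linarith
  set ε : ℝ := max (1/(2*(n:ℝ))) (1/(n:ℝ) - η/2) with hεdef
  have hε0 : 0 < ε := lt_max_of_lt_left (by positivity)
  have hεlt : ε < 1/(n:ℝ) := by
    apply max_lt
    · rw [div_lt_div_iff₀ (by positivity) hN0]; linarith
    · linarith
  have hεle : ε ≤ 1/(n:ℝ) := hεlt.le
  have hεη : 1/(n:ℝ) - η < ε := lt_of_lt_of_le (by linarith) (le_max_right _ _)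
  have h1ε : ε < 1 := by
    have : 1/(n:ℝ) ≤ 1/2 := by
      rw [div_le_div_iff₀ hN0 two_pos]; linarith
    linarith
  have hεmem : ε ∈ Set.Icc 0 (1/(n:ℝ)) := ⟨hε0.le, hεle⟩
  have hNmem : (1/(n:ℝ)) ∈ Set.Icc 0 (1/(n:ℝ)) := ⟨by positivity, le_refl _⟩
  have hmono := gmono_aux n hn
  have hn1 : (0:ℝ) < (n:ℝ) - 1 := by linarith
  refine ⟨ε * (1 - ε)^(n-1) / ((n:ℝ)-1)^(n-1),
    div_pos (mul_pos hε0 (pow_pos (by linarith) _)) (pow_pos hn1 _), ?_, ε, hε0, hεle, hεη, ?_⟩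
  · -- C < 1/n^n
    have hlt := hmono hεmem hNmem hεlt
    simp only at hlt
    have hval : (1/(n:ℝ)) * (1 - 1/(n:ℝ))^(n-1) = ((n:ℝ)-1)^(n-1) / (n:ℝ)^n := by
      have h1 : (1:ℝ) - 1/(n:ℝ) = ((n:ℝ)-1)/(n:ℝ) := by field_simp
      rw [h1, div_pow, one_div, inv_mul_eq_div, div_div, ← pow_succ]
      congr 2
      omega
    rw [hval] at hlt
    rw [div_lt_div_iff₀ (by positivity) (by positivity)]
    calc ε * (1 - ε)^(n-1) * (n:ℝ)^n < (((n:ℝ)-1)^(n-1) / (n:ℝ)^n) * (n:ℝ)^n := by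
          exact mul_lt_mul_of_pos_right hlt (by positivity)
      _ = 1 * ((n:ℝ)-1)^(n-1) := by field_simp
  · intro lam hpos hC i
    set S : ℝ := ∑ j, lam j with hSdef
    have hS : 0 < S :=
      Finset.sum_pos (fun j _ => hpos j) ⟨i, Finset.mem_univ i⟩
    by_contra hcon
    push_neg at hcon
    set t : ℝ := lam i / S with htdef
    have ht0 : 0 < t := div_pos (hpos i) hS
    have htε : t < ε := (div_lt_iff₀ hS).mpr (by linarith [hcon])
    have hlami : lam i = t * S := by rw [htdef, div_mul_cancel₀ _ hS.ne']
    -- AM-GM on the remaining entries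
    have hcard : (Finset.univ.erase i).card = n - 1 := by
      rw [Finset.card_erase_of_mem (Finset.mem_univ i), Finset.card_univ, Fintype.card_fin]
    have hsum : ∑ j ∈ Finset.univ.erase i, lam j = S - lam i := by
      rw [Finset.sum_erase_eq_sub (Finset.mem_univ i)]
    have hampgm := amgm_aux (Finset.univ.erase i) lam (fun j _ => (hpos j).le)
      (by rw [hcard]; omega)
    rw [hcard, hsum] at hampgm
    have hprod : ∏ j, lam j = lam i * ∏ j ∈ Finset.univ.erase i, lam j :=
      (Finset.mul_prod_erase _ _ (Finset.mem_univ i)).symm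
    have hcast : ((n-1:ℕ):ℝ) = (n:ℝ) - 1 := by
      push_cast [Nat.cast_sub (by omega : 1 ≤ n)]; ring
    have hkey : ∏ j, lam j ≤ lam i * ((S - lam i)/((n:ℝ)-1))^(n-1) := by
      rw [hcast] at hampgm
      rw [hprod]
      exact mul_le_mul_of_nonneg_left hampgm (hpos i).le
    -- rewrite in terms of t
    have hrw : lam i * ((S - lam i)/((n:ℝ)-1))^(n-1)
        = (t * (1-t)^(n-1)) * S^n / ((n:ℝ)-1)^(n-1) := by
      have hSn : S ^ n = S * S ^ (n-1) := by
        rw [← pow_succ']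
        congr 1
        omega
      rw [hlami, show S - t * S = (1 - t) * S from by ring, div_pow, mul_pow, hSn]
      field_simp [(pow_pos hn1 (n-1)).ne']
    have htmem : t ∈ Set.Icc 0 (1/(n:ℝ)) := ⟨ht0.le, by linarith⟩
    have hlt := hmono htmem hεmem htε
    simp only at hlt
    have hfinal : (∏ j, lam j) / S^n < ε * (1 - ε)^(n-1) / ((n:ℝ)-1)^(n-1) := by
      have h3 : (∏ j, lam j) / S^n ≤ (t * (1-t)^(n-1)) / ((n:ℝ)-1)^(n-1) := by
        rw [div_le_div_iff₀ (by positivity) (pow_pos hn1 _)]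
        calc (∏ j, lam j) * ((n:ℝ)-1)^(n-1)
            ≤ (t * (1-t)^(n-1)) * S^n / ((n:ℝ)-1)^(n-1) * ((n:ℝ)-1)^(n-1) := by
              rw [← hrw]; exact mul_le_mul_of_nonneg_right hkey (pow_pos hn1 _).le
          _ = t * (1-t)^(n-1) * S^n := by field_simp
      have h4 : (t * (1-t)^(n-1)) / ((n:ℝ)-1)^(n-1) < ε * (1 - ε)^(n-1) / ((n:ℝ)-1)^(n-1) := by
        rw [div_lt_div_iff₀ (pow_pos hn1 _) (pow_pos hn1 _)]
        exact mul_lt_mul_of_pos_right hlt (pow_pos hn1 _)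
      linarith
    linarith
end

section
/- Let n ≥ 2 and let C satisfy 0 < C < 1/nⁿ be such that λᵢ ≥ ε(Σλⱼ) for all i whenever (Πλⱼ)/(Σλⱼ)ⁿ ≥ C. Then additionally |1/λᵢ − n/H| ≤ ε²/(4nβH) for each i, for an appropriate choice of C close enough to 1/nⁿ, where H = Σλⱼ and β > 0 is any fixed constant. -/
open Real Finset

lemma aux1 (s m : ℝ) (hs : 0 ≤ s) (h4 : s^4 ≤ m) (h2 : 2 ≤ m) :
    (s+1)^2*(s^2+1)^2 ≤ 3*m*(s^2+2*s+3) := by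
  have key : 2*m ≥ s^4 + 2 := by linarith
  nlinarith [sq_nonneg (s-1), sq_nonneg (s^2-1), sq_nonneg (s^2-s), sq_nonneg (s^3-2*s), sq_nonneg (s^3 - s^2), mul_nonneg hs hs, sq_nonneg (s^2-2), mul_nonneg (mul_nonneg hs hs) hs]

lemma aux2 (y m : ℝ) (hy : 0 < y) (hyn : y ≤ m) (h2 : 2 ≤ m) :
    Real.log y ≤ (y-1) - (y-1)^2/(3*m) := by
  set s : ℝ := y ^ ((1:ℝ)/4) with hsdef
  have hs : 0 < s := Real.rpow_pos_of_pos hy _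
  have hs4 : s ^ 4 = y := by
    rw [hsdef, ← Real.rpow_natCast (y ^ ((1:ℝ)/4)) 4, ← Real.rpow_mul hy.le]
    norm_num
  have hlog : Real.log y = 4 * Real.log s := by
    rw [← hs4, Real.log_pow]; push_cast; ring
  have hls : Real.log s ≤ s - 1 := Real.log_le_sub_one_of_pos hs
  have h3m : (0:ℝ) < 3*m := by linarith
  have h4' : s^4 ≤ m := by rw [hs4]; exact hyn
  have haux := aux1 s m hs.le h4' h2
  have hkey : (s^4-1)^2/(3*m) ≤ (s^4-1) - 4*(s-1) := by
    rw [div_le_iff₀ h3m]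
    nlinarith [mul_le_mul_of_nonneg_left haux (sq_nonneg (s-1))]
  rw [hlog, ← hs4]
  nlinarith [hkey, hls]

lemma aux3 (N b H L : ℝ) (hN : 0 < N) (hb : 0 < b) (hH : 0 < H) :
    (1/(2*N))^2/(4*N*b*H)*(L*H) = L/(16*N^3*b) := by
  field_simp
  ring

set_option maxHeartbeats 1000000

/-- Lemma 4.3 (second part): for an appropriate pinching constant `C` close to
`1/nⁿ`, the pinching `K/Hⁿ ≥ C` implies `λᵢ ≥ εH` and moreover
`|1/λᵢ − n/H| ≤ ε²/(4nβH)` for each `i`. -/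
theorem stmt_4 (n : ℕ) (hn : 2 ≤ n) (β : ℝ) (hβ : 0 < β) :
    ∃ C : ℝ, 0 < C ∧ C < 1 / (n : ℝ) ^ n ∧
      ∃ ε : ℝ, 0 < ε ∧ ε ≤ 1 / (n : ℝ) ∧
        ∀ lam : Fin n → ℝ, (∀ i, 0 < lam i) →
          C ≤ (∏ i, lam i) / (∑ i, lam i) ^ n →
          (∀ i, ε * (∑ j, lam j) ≤ lam i) ∧
          (∀ i, |1 / lam i - (n : ℝ) / (∑ j, lam j)| ≤
            ε ^ 2 / (4 * (n : ℝ) * β * (∑ j, lam j))) := by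
  have hN2 : (2:ℝ) ≤ (n:ℝ) := by exact_mod_cast hn
  have hN0 : (0:ℝ) < (n:ℝ) := by linarith
  set d : ℝ := min (1/2) (1/(32*(n:ℝ)^4*β)) with hddef
  have hd0 : 0 < d := lt_min (by norm_num) (by positivity)
  have hd1 : d ≤ 1/2 := min_le_left _ _
  have hd2 : d ≤ 1/(32*(n:ℝ)^4*β) := min_le_right _ _
  have hNn : (0:ℝ) < (n:ℝ)^n := by positivity
  refine ⟨1/((n:ℝ)^n*(1+d^2/(3*(n:ℝ)))), by positivity, ?_, 1/(2*(n:ℝ)), by positivity, ?_, ?_⟩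
  · apply one_div_lt_one_div_of_lt hNn
    have hx : 0 < d^2/(3*(n:ℝ)) := by positivity
    exact (lt_mul_iff_one_lt_right hNn).mpr (by linarith)
  · apply one_div_le_one_div_of_le hN0; linarith
  · intro lam hpos hC
    have hne : (univ : Finset (Fin n)).Nonempty := ⟨⟨0, by omega⟩, mem_univ _⟩
    have hH : 0 < ∑ j, lam j := Finset.sum_pos (fun i _ => hpos i) hne
    set H := ∑ j, lam j with hHdef
    have hle1 : ∀ i, lam i ≤ H := fun i =>
      Finset.single_le_sum (f := lam) (fun j _ => (hpos j).le) (mem_univ i)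
    set S := ∑ i, ((n:ℝ)*(lam i/H) - 1)^2 with hSdef
    have hS0 : 0 ≤ S := Finset.sum_nonneg fun i _ => sq_nonneg _
    have hsum1 : ∑ i, ((n:ℝ)*(lam i/H)) = (n:ℝ) := by
      rw [← Finset.mul_sum, ← Finset.sum_div, ← hHdef, div_self hH.ne', mul_one]
    have hsumlog : ∑ i, Real.log ((n:ℝ)*(lam i/H)) ≤ - (S/(3*(n:ℝ))) := by
      have step : ∀ i ∈ univ, Real.log ((n:ℝ)*(lam i/H)) ≤
          ((n:ℝ)*(lam i/H) - 1) - ((n:ℝ)*(lam i/H) - 1)^2/(3*(n:ℝ)) := by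
        intro i _
        apply aux2 _ _ (mul_pos hN0 (div_pos (hpos i) hH)) ?_ hN2
        have h1 : lam i / H ≤ 1 := (div_le_one hH).mpr (hle1 i)
        nlinarith
      calc ∑ i, Real.log ((n:ℝ)*(lam i/H))
          ≤ ∑ i, (((n:ℝ)*(lam i/H) - 1) - ((n:ℝ)*(lam i/H) - 1)^2/(3*(n:ℝ))) :=
            Finset.sum_le_sum step
        _ = - (S/(3*(n:ℝ))) := by
            rw [Finset.sum_sub_distrib, Finset.sum_sub_distrib, hsum1, ← Finset.sum_div,
              ← hSdef, Finset.sum_const, Finset.card_univ, Fintype.card_fin, nsmul_eq_mul,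
              mul_one]
            ring
    have hppos : ∀ i ∈ (univ : Finset (Fin n)), ((n:ℝ)*(lam i/H)) ≠ 0 :=
      fun i _ => (mul_pos hN0 (div_pos (hpos i) hH)).ne'
    have hprodpos : 0 < ∏ i, ((n:ℝ)*(lam i/H)) :=
      Finset.prod_pos fun i _ => mul_pos hN0 (div_pos (hpos i) hH)
    have hprodle : ∏ i, ((n:ℝ)*(lam i/H)) ≤ Real.exp (-(S/(3*(n:ℝ)))) := by
      rw [← Real.exp_log hprodpos, Real.log_prod hppos]
      exact Real.exp_le_exp.mpr hsumlog
    have hexp : Real.exp (-(S/(3*(n:ℝ)))) ≤ 1/(1 + S/(3*(n:ℝ))) := by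
      have h1 : 1 + S/(3*(n:ℝ)) ≤ Real.exp (S/(3*(n:ℝ))) := by
        linarith [Real.add_one_le_exp (S/(3*(n:ℝ)))]
      have h2 : 0 < 1 + S/(3*(n:ℝ)) := by positivity
      rw [le_div_iff₀ h2, Real.exp_neg, inv_mul_le_iff₀ (Real.exp_pos _)]
      simpa [one_mul] using h1
    have hprodlow : 1/(1 + d^2/(3*(n:ℝ))) ≤ ∏ i, ((n:ℝ)*(lam i/H)) := by
      have hp : ∏ i, ((n:ℝ)*(lam i/H)) = (n:ℝ)^n * ((∏ i, lam i)/H^n) := by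
        rw [Finset.prod_mul_distrib, Finset.prod_const, Finset.card_univ, Fintype.card_fin,
          Finset.prod_div_distrib, Finset.prod_const, Finset.card_univ, Fintype.card_fin]
      rw [hp]
      have heq : 1/(1 + d^2/(3*(n:ℝ))) = (n:ℝ)^n * (1/((n:ℝ)^n*(1+d^2/(3*(n:ℝ))))) := by
        field_simp
      rw [heq]
      exact mul_le_mul_of_nonneg_left hC hNn.le
    have hSd : S ≤ d^2 := by
      have hc : 1/(1 + d^2/(3*(n:ℝ))) ≤ 1/(1 + S/(3*(n:ℝ))) :=
        le_trans hprodlow (le_trans hprodle hexp)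
      have h2 : 0 < 1 + S/(3*(n:ℝ)) := by positivity
      have h3 : 0 < 1 + d^2/(3*(n:ℝ)) := by positivity
      have h6 := (div_le_div_iff₀ h3 h2).mp hc
      have h4 : S/(3*(n:ℝ)) ≤ d^2/(3*(n:ℝ)) := by nlinarith
      have h5 : (0:ℝ) < 3*(n:ℝ) := by linarith
      calc S = S/(3*(n:ℝ)) * (3*(n:ℝ)) := by field_simp
        _ ≤ d^2/(3*(n:ℝ)) * (3*(n:ℝ)) := mul_le_mul_of_nonneg_right h4 h5.le
        _ = d^2 := by field_simp
    have hi2 : ∀ i, ((n:ℝ)*lam i - H)^2 ≤ d^2*H^2 := by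
      intro i
      have h1 : ((n:ℝ)*(lam i/H) - 1)^2 ≤ S :=
        Finset.single_le_sum (f := fun i => ((n:ℝ)*(lam i/H) - 1)^2)
          (fun j _ => sq_nonneg _) (mem_univ i)
      have h2 : ((n:ℝ)*lam i - H)^2 = ((n:ℝ)*(lam i/H) - 1)^2 * H^2 := by
        field_simp
      rw [h2]
      calc ((n:ℝ)*(lam i/H) - 1)^2 * H^2 ≤ S * H^2 :=
            mul_le_mul_of_nonneg_right h1 (sq_nonneg H)
        _ ≤ d^2 * H^2 := mul_le_mul_of_nonneg_right hSd (sq_nonneg H)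
    have hlow : ∀ i, H/2 ≤ (n:ℝ)*lam i := by
      intro i
      nlinarith [hi2 i, mul_pos hH hH, hd0, hd1,
        mul_le_mul_of_nonneg_right (mul_self_le_mul_self hd0.le hd1) (sq_nonneg H)]
    constructor
    · intro i
      rw [div_mul_eq_mul_div, one_mul, div_le_iff₀ (by positivity : (0:ℝ) < 2*(n:ℝ))]
      have := hlow i
      nlinarith
    · intro i
      have hlam0 : 0 < lam i := hpos i
      have heq : 1/lam i - (n:ℝ)/H = (H - (n:ℝ)*lam i)/(lam i * H) := by
        field_simp
      rw [heq, abs_div, abs_of_pos (mul_pos hlam0 hH), div_le_iff₀ (mul_pos hlam0 hH)]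
      have habs : |H - (n:ℝ)*lam i| ≤ d*H := by
        rw [abs_le]
        constructor <;> nlinarith [hi2 i, mul_pos hd0 hH]
      rw [aux3 (n:ℝ) β H (lam i) hN0 hβ hH]
      calc |H - (n:ℝ)*lam i| ≤ d*H := habs
        _ ≤ 1/(32*(n:ℝ)^4*β)*H := mul_le_mul_of_nonneg_right hd2 hH.le
        _ ≤ lam i/(16*(n:ℝ)^3*β) := by
            rw [div_mul_eq_mul_div, one_mul, div_le_div_iff₀ (by positivity) (by positivity)]
            nlinarith [mul_nonneg (by positivity : (0:ℝ) ≤ 16*(n:ℝ)^3*β)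
              (by linarith [hlow i] : (0:ℝ) ≤ 2*(n:ℝ)*lam i - H)]
end

section
/- Let n ≥ 2 and K₀ ≥ e^{n/(n-1)}. For f(K) = K^{1/n}·ln(K + K₀) and all K > 0: 1/n − 1 < K·f''(K)/f'(K) ≤ 2/n. In particular 0 < K f''(K)/f'(K) + 1 − 1/n ≤ (n+1)/n. -/
open Real

lemma aux_d1 (a K₀ : ℝ) (x : ℝ) (hx : 0 < x) (hS : 0 < x + K₀) :
    HasDerivAt (fun K : ℝ => K ^ a * Real.log (K + K₀))
      (a * x ^ (a - 1) * Real.log (x + K₀) + x ^ a / (x + K₀)) x := by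
  have h1 : HasDerivAt (fun K : ℝ => K ^ a) (a * x ^ (a - 1)) x :=
    Real.hasDerivAt_rpow_const (Or.inl hx.ne')
  have h2 : HasDerivAt (fun K : ℝ => Real.log (K + K₀)) (1 / (x + K₀)) x := by
    have := ((hasDerivAt_id x).add_const K₀).log hS.ne'
    simpa using this
  have := h1.mul h2
  exact this.congr_deriv (by field_simp)

lemma aux_d2 (a K₀ : ℝ) (x : ℝ) (hx : 0 < x) (hS : 0 < x + K₀) :
    HasDerivAt (fun K : ℝ => a * K ^ (a - 1) * Real.log (K + K₀) + K ^ a / (K + K₀))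
      (a * (a - 1) * x ^ (a - 2) * Real.log (x + K₀) + 2 * a * x ^ (a - 1) / (x + K₀)
        - x ^ a / (x + K₀) ^ 2) x := by
  have h1 : HasDerivAt (fun K : ℝ => K ^ (a - 1)) ((a - 1) * x ^ (a - 1 - 1)) x :=
    Real.hasDerivAt_rpow_const (Or.inl hx.ne')
  have h2 : HasDerivAt (fun K : ℝ => Real.log (K + K₀)) (1 / (x + K₀)) x := by
    have := ((hasDerivAt_id x).add_const K₀).log hS.ne'
    simpa using this
  have h3 : HasDerivAt (fun K : ℝ => K ^ a) (a * x ^ (a - 1)) x :=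
    Real.hasDerivAt_rpow_const (Or.inl hx.ne')
  have h4 : HasDerivAt (fun K : ℝ => K + K₀) 1 x := (hasDerivAt_id x).add_const K₀
  have hterm1 := ((h1.mul h2).const_mul a)
  have hterm2 := h3.div h4 hS.ne'
  have := hterm1.add hterm2
  have he : x ^ (a - 1 - 1) = x ^ (a - 2) := by rw [show a - 1 - 1 = a - 2 by ring]
  have hf : (fun K : ℝ => a * K ^ (a - 1) * Real.log (K + K₀) + K ^ a / (K + K₀)) =
      (fun y => a * ((fun K : ℝ => K ^ (a - 1)) * fun K => Real.log (K + K₀)) y) +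
        (fun K : ℝ => K ^ a) / fun K => K + K₀ := by
    ext y; simp only [Pi.add_apply, Pi.mul_apply, Pi.div_apply]; ring
  rw [hf]
  refine this.congr_deriv ?_
  · rw [he]; field_simp; ring

set_option maxHeartbeats 1000000 in
/-- Condition 1.1(iii) for `f(K) = K^{1/n} ln(K+K₀)`:
`1/n − 1 < K f''(K)/f'(K) ≤ 2/n`, and in particular
`0 < K f''(K)/f'(K) + 1 − 1/n ≤ (n+1)/n`. -/
theorem stmt_8 (n : ℕ) (hn : 2 ≤ n) (K₀ : ℝ)
    (hK₀ : Real.exp ((n : ℝ) / ((n : ℝ) - 1)) ≤ K₀) :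
    ∀ K : ℝ, 0 < K →
      (1 / (n : ℝ) - 1 <
          K * deriv (deriv (fun K : ℝ => K ^ ((1 : ℝ) / n) * Real.log (K + K₀))) K /
            deriv (fun K : ℝ => K ^ ((1 : ℝ) / n) * Real.log (K + K₀)) K ∧
        K * deriv (deriv (fun K : ℝ => K ^ ((1 : ℝ) / n) * Real.log (K + K₀))) K /
            deriv (fun K : ℝ => K ^ ((1 : ℝ) / n) * Real.log (K + K₀)) K ≤ 2 / (n : ℝ)) ∧
      (0 <
          K * deriv (deriv (fun K : ℝ => K ^ ((1 : ℝ) / n) * Real.log (K + K₀))) K /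
            deriv (fun K : ℝ => K ^ ((1 : ℝ) / n) * Real.log (K + K₀)) K + 1 - 1 / (n : ℝ) ∧
        K * deriv (deriv (fun K : ℝ => K ^ ((1 : ℝ) / n) * Real.log (K + K₀))) K /
            deriv (fun K : ℝ => K ^ ((1 : ℝ) / n) * Real.log (K + K₀)) K + 1 - 1 / (n : ℝ) ≤
          ((n : ℝ) + 1) / (n : ℝ)) := by
  intro K hK
  have hn1 : (2:ℝ) ≤ (n:ℝ) := by exact_mod_cast hn
  have hnpos : (0:ℝ) < n := by linarith
  set a : ℝ := 1 / n with ha_def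
  have ha : 0 < a := by positivity
  have ha2 : a ≤ 1 / 2 := by
    rw [ha_def]
    rw [div_le_div_iff₀ hnpos (by norm_num)]
    linarith
  have hK₀1 : 1 < K₀ := by
    have : (1:ℝ) < Real.exp ((n : ℝ) / ((n : ℝ) - 1)) := by
      calc (1:ℝ) = Real.exp 0 := Real.exp_zero.symm
        _ < _ := Real.exp_lt_exp.mpr (div_pos (by linarith) (by linarith))
    linarith
  have hK₀pos : 0 < K₀ := by linarith
  have hSpos : ∀ x : ℝ, 0 < x → 0 < x + K₀ := fun x hx => by linarith
  have hS : 0 < K + K₀ := hSpos K hK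
  have hS1 : 1 < K + K₀ := by linarith
  have hL : 0 < Real.log (K + K₀) := Real.log_pos hS1
  set L := Real.log (K + K₀) with hLdef
  set S := K + K₀ with hSdef
  -- derivative identifications
  have hd1 : deriv (fun K : ℝ => K ^ a * Real.log (K + K₀)) K
      = a * K ^ (a - 1) * L + K ^ a / S := (aux_d1 a K₀ K hK hS).deriv
  have hev : deriv (fun K : ℝ => K ^ a * Real.log (K + K₀))
      =ᶠ[nhds K] fun x => a * x ^ (a - 1) * Real.log (x + K₀) + x ^ a / (x + K₀) := by
    filter_upwards [Ioi_mem_nhds hK] with x hx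
    exact (aux_d1 a K₀ x hx (hSpos x hx)).deriv
  have hd2 : deriv (deriv (fun K : ℝ => K ^ a * Real.log (K + K₀))) K
      = a * (a - 1) * K ^ (a - 2) * L + 2 * a * K ^ (a - 1) / S - K ^ a / S ^ 2 := by
    rw [hev.deriv_eq]
    exact (aux_d2 a K₀ K hK hS).deriv
  rw [hd1, hd2]
  -- algebraic reduction
  set t : ℝ := K / S with htdef
  have ht0 : 0 < t := div_pos hK hS
  have ht1 : t < 1 := (div_lt_one hS).mpr (by linarith)
  set D : ℝ := a * L + t with hDdef
  set N : ℝ := a * (a - 1) * L + 2 * a * t - t ^ 2 with hNdef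
  have hD : 0 < D := by
    have := mul_pos ha hL
    rw [hDdef]; linarith
  have hPa : 0 < K ^ a := Real.rpow_pos_of_pos hK a
  have hpow1 : K ^ (a - 1) = K ^ a / K := by
    rw [Real.rpow_sub hK, Real.rpow_one]
  have hpow2 : K ^ (a - 2) = K ^ a / K ^ 2 := by
    rw [Real.rpow_sub hK, show (2:ℝ) = ((2:ℕ):ℝ) by norm_num, Real.rpow_natCast]
  clear_value a L S t D N
  have R_eq : K * (a * (a - 1) * K ^ (a - 2) * L + 2 * a * K ^ (a - 1) / S - K ^ a / S ^ 2)
      / (a * K ^ (a - 1) * L + K ^ a / S) = N / D := by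
    rw [hpow1, hpow2, hNdef, hDdef, htdef]
    rw [div_eq_div_iff]
    · field_simp
    · have : a * (K ^ a / K) * L + K ^ a / S = (K ^ a / K) * (a * L + K / S) := by
        field_simp
      rw [this]
      have h1 : (0:ℝ) < K ^ a / K := by positivity
      have h2 : (0:ℝ) < a * L + K / S := by rw [hDdef, htdef] at hD; exact hD
      positivity
    · rw [hDdef, htdef] at hD; exact ne_of_gt hD
  rw [R_eq]
  clear hd1 hd2 hev R_eq hpow1 hpow2 hPa hK₀
  have hub : N / D ≤ 2 / (n:ℝ) := by
    have h2a : 2 / (n:ℝ) = 2 * a := by rw [ha_def]; ring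
    rw [h2a, div_le_iff₀ hD, hNdef, hDdef]
    nlinarith [mul_nonneg (mul_nonneg ha.le (by linarith : (0:ℝ) ≤ 1 + a)) hL.le, sq_nonneg t]
  have hlb : a - 1 < N / D := by
    rw [lt_div_iff₀ hD, hNdef, hDdef]
    nlinarith [mul_pos ht0 (show (0:ℝ) < a + 1 - t by linarith)]
  have hnn : ((n:ℝ) + 1) / n = 2 / (n:ℝ) + 1 - a := by
    rw [ha_def]; field_simp; ring
  refine ⟨⟨hlb, hub⟩, ⟨by linarith, by rw [hnn]; linarith⟩⟩
end

section
/- Let H > 0, K > 0, and let h be a positive definite symmetric matrix with tr(h) = H and a covariant 3-tensor ∇h with traces ∇H and ∇K = K h^{kl}∇h_{kl}. Then the pointwise algebraic identity (1/(nK²))∇ᵢK∇ⱼK + ∇ᵢh^{kl}∇ⱼh_{kl} = −(1/H²)h^{km}h^{ln}(H∇ᵢh_{mn} − ∇ᵢH h_{mn})(H∇ⱼh_{kl} − ∇ⱼH h_{kl}) + (H^{2n}/(nK²))∇ᵢ(K/Hⁿ)∇ⱼ(K/Hⁿ) holds, where ∇ᵢh^{kl} = −h^{km}h^{ln}∇ᵢh_{mn}.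 -/
open Matrix Finset

lemma sum2 {n : ℕ} (M N : Matrix (Fin n) (Fin n) ℝ) :
    (∑ k, ∑ l, M k l * N k l) = (M * Nᵀ).trace := by
  simp only [Matrix.trace, Matrix.diag, Matrix.mul_apply, Matrix.transpose_apply]

lemma sum4 {n : ℕ} (A B C : Matrix (Fin n) (Fin n) ℝ) (hA : Aᵀ = A) :
    (∑ k, ∑ l, ∑ m, ∑ m', A k m * A l m' * B m m' * C k l)
      = (A * B * A * Cᵀ).trace := by
  have : (∑ k, ∑ l, ∑ m, ∑ m', A k m * A l m' * B m m' * C k l)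
      = ∑ k, ∑ l, (A * B * Aᵀ) k l * C k l := by
    refine Finset.sum_congr rfl fun k _ => Finset.sum_congr rfl fun l _ => ?_
    simp only [Matrix.mul_apply, Matrix.transpose_apply, Finset.sum_mul]
    rw [Finset.sum_comm]
    exact Finset.sum_congr rfl fun m' _ => Finset.sum_congr rfl fun m _ => by ring
  rw [this, sum2, hA]



/-- The key algebraic identity (3.11): with `h` the (positive definite,
symmetric) second fundamental form in an orthonormal frame, `H = tr h`,
`∇ᵢK = K (h⁻¹)^{kl}∇ᵢh_{kl}`, `∇ᵢH = tr(∇ᵢh)`, `∇ᵢh^{kl} = −(h⁻¹ ∇ᵢh h⁻¹)^{kl}`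
and `∇ᵢ(K/Hⁿ) = H^{−n}∇ᵢK − nKH^{−n−1}∇ᵢH`, one has
`(1/(nK²))∇ᵢK∇ⱼK + ∇ᵢh^{kl}∇ⱼh_{kl}
  = −(1/H²) h^{km}h^{ln}(H∇ᵢh_{mn} − ∇ᵢH h_{mn})(H∇ⱼh_{kl} − ∇ⱼH h_{kl})
    + (H^{2n}/(nK²))∇ᵢ(K/Hⁿ)∇ⱼ(K/Hⁿ)`. -/
theorem stmt_17 (n : ℕ) (hn : 2 ≤ n) (H K : ℝ) (hHpos : 0 < H) (hKpos : 0 < K)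
    (h : Matrix (Fin n) (Fin n) ℝ) (hPD : h.PosDef)
    (htr : h.trace = H)
    (Dh : Fin n → Matrix (Fin n) (Fin n) ℝ) (hDhsym : ∀ i, (Dh i).IsSymm)
    (DH DK Dp : Fin n → ℝ)
    (hDH : ∀ i, DH i = (Dh i).trace)
    (hDK : ∀ i, DK i = K * (h⁻¹ * Dh i).trace)
    (hDp : ∀ i, Dp i = DK i / H ^ n - n * K * DH i / H ^ (n + 1)) :
    ∀ i j : Fin n,
      (1 / ((n : ℝ) * K ^ 2)) * DK i * DK j +
        (∑ k, ∑ l, (-(h⁻¹ * Dh i * h⁻¹)) k l * Dh j k l) =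
      -(1 / H ^ 2) *
        (∑ k, ∑ l, ∑ m, ∑ m', h⁻¹ k m * h⁻¹ l m' *
          (H * Dh i m m' - DH i * h m m') * (H * Dh j k l - DH j * h k l)) +
      (H ^ (2 * n) / ((n : ℝ) * K ^ 2)) * Dp i * Dp j := by
  intro i j
  have hs : hᵀ = h := by simpa using hPD.isHermitian.eq
  have hinvs : (h⁻¹)ᵀ = h⁻¹ := by rw [Matrix.transpose_nonsing_inv, hs]
  have hdet : IsUnit h.det := (Matrix.isUnit_iff_isUnit_det h).mp hPD.isUnit
  have hinvh : h⁻¹ * h = 1 := Matrix.nonsing_inv_mul h hdet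
  set X : Fin n → Matrix (Fin n) (Fin n) ℝ := fun i => h⁻¹ * Dh i with hX
  -- second sum on LHS
  have hS2 : (∑ k, ∑ l, (-(h⁻¹ * Dh i * h⁻¹)) k l * Dh j k l)
      = -(X i * X j).trace := by
    rw [sum2, (hDhsym j).eq]
    rw [Matrix.neg_mul, Matrix.trace_neg, hX]
    ring_nf
    rw [Matrix.mul_assoc (h⁻¹ * Dh i)]
  -- quadruple sum on RHS
  have hQ : (∑ k, ∑ l, ∑ m, ∑ m', h⁻¹ k m * h⁻¹ l m' *
          (H * Dh i m m' - DH i * h m m') * (H * Dh j k l - DH j * h k l))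
      = H * H * (X i * X j).trace - H * DH j * (X i).trace
        - DH i * H * (X j).trace + DH i * DH j * n := by
    have e1 : (∑ k, ∑ l, ∑ m, ∑ m', h⁻¹ k m * h⁻¹ l m' *
          (H * Dh i m m' - DH i * h m m') * (H * Dh j k l - DH j * h k l))
        = (h⁻¹ * (H • Dh i - DH i • h) * h⁻¹ * (H • Dh j - DH j • h)ᵀ).trace := by
      rw [← sum4 (h⁻¹) (H • Dh i - DH i • h) (H • Dh j - DH j • h) hinvs]
      simp [Matrix.sub_apply, Matrix.smul_apply, smul_eq_mul]
    rw [e1]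
    have e2 : (H • Dh j - DH j • h)ᵀ = H • Dh j - DH j • h := by
      rw [Matrix.transpose_sub, Matrix.transpose_smul, Matrix.transpose_smul,
        (hDhsym j).eq, hs]
    rw [e2]
    have e3 : ∀ k : Fin n, h⁻¹ * (H • Dh k - DH k • h) = H • X k - DH k • 1 := by
      intro k
      rw [Matrix.mul_sub, Matrix.mul_smul, Matrix.mul_smul, hinvh, hX]
    have e4 : h⁻¹ * (H • Dh i - DH i • h) * h⁻¹ * (H • Dh j - DH j • h)
        = (H • X i - DH i • (1 : Matrix (Fin n) (Fin n) ℝ))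
          * (H • X j - DH j • 1) := by
      rw [e3 i, Matrix.mul_assoc, e3 j]
    rw [e4]
    rw [Matrix.sub_mul, Matrix.mul_sub, Matrix.mul_sub]
    simp only [Matrix.smul_mul, Matrix.mul_smul, smul_smul, Matrix.one_mul,
      Matrix.mul_one, Matrix.trace_sub, Matrix.trace_smul, Matrix.trace_one,
      smul_eq_mul]
    simp only [Fintype.card_fin]
    ring
  rw [hS2, hQ, hDp i, hDp j, hDK i, hDK j]
  simp only [hX]
  have hH0 : H ≠ 0 := hHpos.ne'
  have hK0 : K ≠ 0 := hKpos.ne'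
  have hn0 : (n : ℝ) ≠ 0 := by positivity
  field_simp
  ring
end
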